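/- For any probability mass functions P_1, ..., P_n on a finite alphabet Y satisfying ∑_{y∈Y} max2{P_1(y),...,P_n(y)} ≤ 1, where max2 denotes the second largest value, there exists a coupling of P_1,...,P_n such that ∑_{y∈Y} P(∪_{i=1}^n {Y_i = y}) = ∑_{y∈Y} max{P_1(y),...,P_n(y)}. -/

import Mathlib

open Finset

def IsPMF {α : Type*} [Fintype α] (P : α → ℝ) : Prop :=
  (∀ a, 0 ≤ P a) ∧ ∑ a, P a = 1

noncomputable def max2 {ι : Type*} [Fintype ι] (f : ι → ℝ) : ℝ :=
  ⨆ p : {p : ι × ι // p.1 ≠ p.2}, min (f p.val.1) (f p.val.2)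

lemma sum_prod_fun {ι Y : Type*} [Fintype ι] [Fintype Y] [DecidableEq ι] (g : ι → Y → ℝ) :
    ∑ f : ι → Y, ∏ i, g i (f i) = ∏ i, ∑ y, g i y := by
  rw [Finset.prod_univ_sum, ← Fintype.piFinset_univ]

section Generic
variable {ι Y Z : Type*} [Fintype ι] [Fintype Y] [Fintype Z] [DecidableEq ι] [DecidableEq Y]

lemma coupling_nonneg (π : Z → ℝ) (q : ι → Z → Y → ℝ)
    (hπ0 : ∀ z, 0 ≤ π z) (hq0 : ∀ i z y, 0 ≤ q i z y) (f : ι → Y) :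
    0 ≤ ∑ z, π z * ∏ i, q i z (f i) := by
  apply Finset.sum_nonneg
  intro z _
  exact mul_nonneg (hπ0 z) (Finset.prod_nonneg fun i _ => hq0 i z (f i))

lemma coupling_marginal (π : Z → ℝ) (q : ι → Z → Y → ℝ)
    (hq1 : ∀ i z, ∑ y, q i z y = 1) (i : ι) (y : Y) :
    ∑ f : ι → Y, (if f i = y then (∑ z, π z * ∏ j, q j z (f j)) else 0)
      = ∑ z, π z * q i z y := by
  have step1 : ∀ f : ι → Y, (if f i = y then (∑ z, π z * ∏ j, q j z (f j)) else 0)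
      = ∑ z, π z * ∏ j, (if j = i then (if f j = y then q i z y else 0) else q j z (f j)) := by
    intro f
    by_cases hf : f i = y
    · simp only [hf, if_true]
      congr 1
      ext z
      congr 1
      apply Finset.prod_congr rfl
      intro j _
      by_cases hj : j = i <;> simp [hj, hf]
    · simp only [hf, if_false]
      symm
      apply Finset.sum_eq_zero
      intro z _
      have : ∏ j, (if j = i then (if f j = y then q i z y else 0) else q j z (f j)) = 0 := by
        apply Finset.prod_eq_zero (Finset.mem_univ i)
        simp [hf]
      rw [this, mul_zero]
  calc ∑ f : ι → Y, (if f i = y then (∑ z, π z * ∏ j, q j z (f j)) else 0)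
      = ∑ f : ι → Y, ∑ z, π z * ∏ j, (if j = i then (if f j = y then q i z y else 0) else q j z (f j)) := by
        exact Finset.sum_congr rfl fun f _ => step1 f
    _ = ∑ z, π z * ∑ f : ι → Y, ∏ j, (if j = i then (if f j = y then q i z y else 0) else q j z (f j)) := by
        rw [Finset.sum_comm]
        apply Finset.sum_congr rfl
        intro z _
        rw [Finset.mul_sum]
    _ = ∑ z, π z * q i z y := by
        apply Finset.sum_congr rfl
        intro z _
        congr 1
        have := sum_prod_fun (ι := ι) (Y := Y)
          (fun j y' => if j = i then (if y' = y then q i z y else 0) else q j z y')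
        rw [this]
        have : ∀ j, (∑ y', if j = i then (if y' = y then q i z y else 0) else q j z y')
            = if j = i then q i z y else 1 := by
          intro j
          by_cases hj : j = i
          · simp [hj]
          · simp [hj, hq1 j z]
        rw [Finset.prod_congr rfl (fun j _ => this j)]
        simp

lemma coupling_total (π : Z → ℝ) (q : ι → Z → Y → ℝ)
    (hπ1 : ∑ z, π z = 1) (hq1 : ∀ i z, ∑ y, q i z y = 1) :
    ∑ f : ι → Y, ∑ z, π z * ∏ i, q i z (f i) = 1 := by
  rw [Finset.sum_comm]
  have : ∀ z, ∑ f : ι → Y, π z * ∏ i, q i z (f i) = π z := by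
    intro z
    rw [← Finset.mul_sum, sum_prod_fun]
    simp [hq1]
  rw [Finset.sum_congr rfl (fun z _ => this z), hπ1]

lemma coupling_support (π : Z → ℝ) (q : ι → Z → Y → ℝ) (f : ι → Y)
    (h : (∑ z, π z * ∏ i, q i z (f i)) ≠ 0) :
    ∃ z, π z ≠ 0 ∧ ∀ i, q i z (f i) ≠ 0 := by
  by_contra hc
  push_neg at hc
  apply h
  apply Finset.sum_eq_zero
  intro z _
  by_cases hz : π z = 0
  · rw [hz, zero_mul]
  · obtain ⟨i, hi⟩ := hc z hz
    rw [Finset.prod_eq_zero (Finset.mem_univ i) hi, mul_zero]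

end Generic

theorem stmt2 {ι Y : Type*} [Fintype ι] [Fintype Y] [DecidableEq ι] [Nonempty ι] [DecidableEq Y]
    (P : ι → Y → ℝ) (hP : ∀ i, IsPMF (P i))
    (h2 : ∑ y, max2 (fun i => P i y) ≤ 1) :
    ∃ Q : (ι → Y) → ℝ, IsPMF Q ∧
      (∀ i y, ∑ f : ι → Y, (if f i = y then Q f else 0) = P i y) ∧
      ∑ y, ∑ f : ι → Y, (if ∃ i, f i = y then Q f else 0) = ∑ y, ⨆ i, P i y := by
  classical
  obtain ⟨i₀⟩ := ‹Nonempty ι›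
  -- Y is nonempty
  have hYne : Nonempty Y := by
    by_contra hY
    have : (Finset.univ : Finset Y) = ∅ := by
      simp [Finset.univ_eq_empty_iff.2 (not_nonempty_iff.1 hY)]
    have h1 := (hP i₀).2
    rw [this] at h1
    simp at h1
  obtain ⟨y₀⟩ := hYne
  -- choose leaders
  choose l hl using fun y => Finite.exists_max fun i => P i y
  have hsup : ∀ y, (⨆ i, P i y) = P (l y) y := by
    intro y
    apply le_antisymm
    · exact ciSup_le (hl y)
    · exact le_ciSup (f := fun i => P i y) (Set.Finite.bddAbove (Set.finite_range _)) (l y)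
  set c : Y → ℝ := fun y => max2 fun i => P i y with hc_def
  have hc_ge : ∀ y i, l y ≠ i → P i y ≤ c y := by
    intro y i hi
    have hmin : min (P i y) (P (l y) y) = P i y := min_eq_left (hl y i)
    have := le_ciSup (f := fun p : {p : ι × ι // p.1 ≠ p.2} => min (P p.val.1 y) (P p.val.2 y))
      (Set.Finite.bddAbove (Set.finite_range _)) ⟨(i, l y), fun h => hi (by simpa using h.symm)⟩
    exact le_trans (le_of_eq hmin.symm) this
  have hc0 : ∀ y, 0 ≤ c y := by
    intro y
    by_cases hne : Nonempty {p : ι × ι // p.1 ≠ p.2}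
    · obtain ⟨p⟩ := hne
      have h1 : (0:ℝ) ≤ min (P p.val.1 y) (P p.val.2 y) :=
        le_min ((hP _).1 y) ((hP _).1 y)
      exact h1.trans (le_ciSup (f := fun p : {p : ι × ι // p.1 ≠ p.2} =>
        min (P p.val.1 y) (P p.val.2 y)) (Set.Finite.bddAbove (Set.finite_range _)) p)
    · have : c y = 0 := by
        have := not_nonempty_iff.1 hne
        simp only [hc_def, max2]
        exact Real.iSup_of_isEmpty _
      rw [this]
  have hcM : ∀ y, c y ≤ P (l y) y := by
    intro y
    by_cases hne : Nonempty {p : ι × ι // p.1 ≠ p.2}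
    · apply ciSup_le
      intro p
      exact (min_le_left _ _).trans (hl y p.val.1)
    · have : c y = 0 := by
        have := not_nonempty_iff.1 hne
        simp only [hc_def, max2]
        exact Real.iSup_of_isEmpty _
      rw [this]; exact (hP _).1 y
  set D : Y → ℝ := fun y => P (l y) y - c y with hD_def
  have hD0 : ∀ y, 0 ≤ D y := fun y => sub_nonneg.2 (hcM y)
  set T : ι → ℝ := fun i => ∑ y, if l y = i then D y else 0 with hT_def
  set α : ℝ := 1 - ∑ y, c y with hα_def
  have hα0 : 0 ≤ α := sub_nonneg.2 h2
  -- key identity T i = α + ∑ (if l y = i then 0 else c y - P i y)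
  have hkey : ∀ i, T i = α + ∑ y, (if l y = i then 0 else c y - P i y) := by
    intro i
    have hpt : ∀ y, (if l y = i then D y else 0)
        = (P i y - c y) + (if l y = i then 0 else c y - P i y) := by
      intro y
      by_cases hy : l y = i
      · rw [if_pos hy, if_pos hy, add_zero]
        simp only [hD_def]
        rw [hy]
      · rw [if_neg hy, if_neg hy]
        ring
    calc T i = ∑ y, ((P i y - c y) + (if l y = i then 0 else c y - P i y)) :=
          Finset.sum_congr rfl fun y _ => hpt y
      _ = (∑ y, P i y - ∑ y, c y) + ∑ y, (if l y = i then 0 else c y - P i y) := by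
          rw [Finset.sum_add_distrib, Finset.sum_sub_distrib]
      _ = α + ∑ y, (if l y = i then 0 else c y - P i y) := by
          rw [(hP i).2, hα_def]
  have hterm0 : ∀ i y, 0 ≤ (if l y = i then 0 else c y - P i y) := by
    intro i y
    by_cases hy : l y = i
    · simp [hy]
    · simp only [hy, if_false]
      exact sub_nonneg.2 (hc_ge y i hy)
  have hT0 : ∀ i, 0 ≤ T i := by
    intro i
    apply Finset.sum_nonneg
    intro y _
    by_cases hy : l y = i <;> simp [hy, hD0 y]
  have hαT : ∀ i, α ≤ T i := by
    intro i
    rw [hkey i]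
    have : 0 ≤ ∑ y, (if l y = i then 0 else c y - P i y) :=
      Finset.sum_nonneg fun y _ => hterm0 i y
    linarith
  -- consequences of T i = 0
  have hTzero : ∀ i, T i = 0 → (α = 0 ∧ (∀ y, l y ≠ i → c y = P i y) ∧ (∀ y, l y = i → D y = 0)) := by
    intro i hTi
    have hsum0 : ∑ y, (if l y = i then 0 else c y - P i y) = 0 := by
      have := hkey i
      rw [hTi] at this
      have h0 : 0 ≤ ∑ y, (if l y = i then 0 else c y - P i y) :=
        Finset.sum_nonneg fun y _ => hterm0 i y
      linarith
    have hall := (Finset.sum_eq_zero_iff_of_nonneg fun y _ => hterm0 i y).1 hsum0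
    refine ⟨?_, ?_, ?_⟩
    · have := hkey i
      rw [hTi, hsum0] at this
      linarith
    · intro y hy
      have := hall y (Finset.mem_univ y)
      rw [if_neg hy] at this
      linarith
    · intro y hy
      have hall2 := (Finset.sum_eq_zero_iff_of_nonneg (fun y _ => by
        by_cases h : l y = i <;> simp [h, hD0 y])).1 hTi y (Finset.mem_univ y)
      rwa [if_pos hy] at hall2
  -- define μ
  set μ : ι → Y → ℝ := fun i y =>
    if T i = 0 then (if y = y₀ then 1 else 0) else (if l y = i then D y else 0) / T i with hμ_def
  have hμ0 : ∀ i y, 0 ≤ μ i y := by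
    intro i y
    simp only [hμ_def]
    by_cases hTi : T i = 0
    · simp only [hTi, if_true]
      split <;> norm_num
    · simp only [hTi, if_false]
      apply div_nonneg _ (hT0 i)
      split <;> simp [hD0 y]
  have hμ1 : ∀ i, ∑ y, μ i y = 1 := by
    intro i
    simp only [hμ_def]
    by_cases hTi : T i = 0
    · simp [hTi]
    · simp only [hTi, if_false]
      rw [← Finset.sum_div]
      exact div_self hTi
  have hμsupp : ∀ i y, T i ≠ 0 → μ i y ≠ 0 → l y = i := by
    intro i y hTi hμy
    simp only [hμ_def, hTi, if_false] at hμy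
    by_contra hy
    rw [if_neg hy] at hμy
    simp at hμy
  -- define π and q
  set π : Option Y → ℝ := fun z => z.elim α c with hπ_def
  set q : ι → Option Y → Y → ℝ := fun i z y' =>
    Option.elim z (μ i y') (fun y =>
      if l y = i ∨ c y = 0 then (if y' = y then 1 else 0)
      else (P i y / c y) * (if y' = y then 1 else 0) + (1 - P i y / c y) * μ i y') with hq_def
  have hπ0 : ∀ z, 0 ≤ π z := by
    intro z
    cases z with
    | none => exact hα0
    | some y => exact hc0 y
  have hπ1 : ∑ z, π z = 1 := by
    rw [Fintype.sum_option]
    simp only [hπ_def, Option.elim]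
    rw [hα_def]; ring
  have hq0 : ∀ i z y', 0 ≤ q i z y' := by
    intro i z y'
    cases z with
    | none => exact hμ0 i y'
    | some y =>
      simp only [hq_def, Option.elim]
      by_cases hcase : l y = i ∨ c y = 0
      · rw [if_pos hcase]; split <;> norm_num
      · rw [if_neg hcase]
        push_neg at hcase
        have hcy : 0 < c y := lt_of_le_of_ne (hc0 y) (Ne.symm hcase.2)
        have hr0 : 0 ≤ P i y / c y := div_nonneg ((hP i).1 y) (hc0 y)
        have hr1 : P i y / c y ≤ 1 := (div_le_one hcy).2 (hc_ge y i hcase.1)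
        apply add_nonneg
        · apply mul_nonneg hr0; split <;> norm_num
        · exact mul_nonneg (by linarith) (hμ0 i y')
  have hq1 : ∀ i z, ∑ y', q i z y' = 1 := by
    intro i z
    cases z with
    | none => exact hμ1 i
    | some y =>
      simp only [hq_def, Option.elim]
      by_cases hcase : l y = i ∨ c y = 0
      · simp [hcase]
      · simp only [if_neg hcase]
        rw [Finset.sum_add_distrib, ← Finset.mul_sum, ← Finset.mul_sum, hμ1 i,
          Finset.sum_ite_eq' Finset.univ y (fun _ => (1:ℝ))]
        simp only [Finset.mem_univ, if_true, mul_one]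
        ring
  -- the coupling
  set Q : (ι → Y) → ℝ := fun f => ∑ z, π z * ∏ i, q i z (f i) with hQ_def
  have hmarg : ∀ i y, ∑ f : ι → Y, (if f i = y then Q f else 0) = P i y := by
    intro i y
    rw [coupling_marginal π q hq1 i y]
    -- compute ∑ z, π z * q i z y
    rw [Fintype.sum_option]
    simp only [hπ_def, Option.elim]
    have hptwise : ∀ y', c y' * q i (some y') y
        = (if y' = y then (if l y = i then c y else P i y) else 0)
          + (if l y' = i then 0 else c y' - P i y') * μ i y := by
      intro y'
      simp only [hq_def, Option.elim]
      by_cases h1 : l y' = i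
      · rw [if_pos (Or.inl h1), if_pos h1]
        by_cases h2 : y' = y
        · subst h2; simp [h1]
        · have h2' : ¬ (y = y') := fun h => h2 h.symm
          simp [h2, h2']
      · by_cases h3 : c y' = 0
        · rw [if_pos (Or.inr h3), if_neg h1, h3]
          have hP0 : P i y' = 0 := le_antisymm (h3 ▸ hc_ge y' i h1) ((hP i).1 y')
          by_cases h2 : y' = y
          · subst h2; simp [h1, hP0]
          · simp [h2, hP0]
        · rw [if_neg (by tauto), if_neg h1]
          have hcy : c y' ≠ 0 := h3
          by_cases h2 : y' = y
          · subst h2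
            simp only [if_pos rfl, if_neg h1]
            field_simp
            simp
          · have h2' : ¬ (y = y') := fun h => h2 h.symm
            simp only [if_neg h2, if_neg h2']
            field_simp
            simp
    have : ∑ y', c y' * q i (some y') y
        = (if l y = i then c y else P i y) + (∑ y', (if l y' = i then 0 else c y' - P i y')) * μ i y := by
      rw [Finset.sum_congr rfl fun y' _ => hptwise y', Finset.sum_add_distrib, ← Finset.sum_mul]
      congr 1
      rw [Finset.sum_ite_eq' Finset.univ y (fun _ => if l y = i then c y else P i y)]
      simp
    rw [this]
    have hfinal : α * q i none y + ((if l y = i then c y else P i y)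
        + (∑ y', (if l y' = i then 0 else c y' - P i y')) * μ i y) = P i y := by
      have hqnone : q i none y = μ i y := rfl
      rw [hqnone]
      have hTμ : α * μ i y + (∑ y', (if l y' = i then 0 else c y' - P i y')) * μ i y
          = T i * μ i y := by rw [hkey i]; ring
      have hTμ2 : T i * μ i y = if l y = i then D y else 0 := by
        by_cases hTi : T i = 0
        · rw [hTi, zero_mul]
          by_cases hy : l y = i
          · rw [if_pos hy, (hTzero i hTi).2.2 y hy]
          · rw [if_neg hy]
        · simp only [hμ_def, hTi, if_false]
          rw [mul_div_cancel₀]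
          exact hTi
      by_cases hy : l y = i
      · have : P i y = c y + D y := by rw [hD_def, ← hy]; ring
        rw [this]
        simp only [hy, if_true] at hTμ2 ⊢
        linarith [hTμ, hTμ2]
      · simp only [hy, if_false] at hTμ2 ⊢
        linarith [hTμ, hTμ2]
    linarith [hfinal]
  -- support property
  have hsupport : ∀ f : ι → Y, Q f ≠ 0 → ∀ i, f (l (f i)) = f i := by
    intro f hf i
    obtain ⟨z, hz, hq⟩ := coupling_support π q f hf
    cases z with
    | none =>
      have hα' : α ≠ 0 := hz
      have hTi : T i ≠ 0 := fun h => hα' (((hTzero i h).1))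
      have := hμsupp i (f i) hTi (hq i)
      rw [this]
    | some y =>
      have hcy : c y ≠ 0 := hz
      have hqi := hq i
      simp only [hq_def, Option.elim] at hqi
      by_cases h1 : l y = i
      · rw [if_pos (Or.inl h1)] at hqi
        have hfi : f i = y := by
          by_contra h
          rw [if_neg h] at hqi
          exact hqi rfl
        rw [hfi, h1, hfi]
      · rw [if_neg (by tauto)] at hqi
        by_cases hfi : f i = y
        · -- leader of y must also be at y
          have hfj : f (l y) = y := by
            by_contra h
            apply hq (l y)
            simp only [hq_def, Option.elim]
            simp [h]
          rw [hfi, hfj]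
        · rw [if_neg hfi, mul_zero, zero_add] at hqi
          have h5 : (1 - P i y / c y) ≠ 0 ∧ μ i (f i) ≠ 0 := by
            constructor
            · intro h; rw [h, zero_mul] at hqi; exact hqi rfl
            · intro h; rw [h, mul_zero] at hqi; exact hqi rfl
          have hTi : T i ≠ 0 := by
            intro hT
            have := (hTzero i hT).2.1 y h1
            apply h5.1
            rw [← this]
            field_simp
            norm_num
          have := hμsupp i (f i) hTi h5.2
          rw [this]
  -- union sum
  have hunion : ∀ y, ∑ f : ι → Y, (if ∃ i, f i = y then Q f else 0) = P (l y) y := by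
    intro y
    have : ∀ f : ι → Y, (if ∃ i, f i = y then Q f else 0) = (if f (l y) = y then Q f else 0) := by
      intro f
      by_cases hQf : Q f = 0
      · rw [hQf]; simp
      · have hiff : (∃ i, f i = y) ↔ f (l y) = y := by
          constructor
          · rintro ⟨i, hi⟩
            have := hsupport f hQf i
            rw [hi] at this
            exact this
          · intro h; exact ⟨l y, h⟩
        simp only [hiff]
    rw [Finset.sum_congr rfl fun f _ => this f]
    exact hmarg (l y) y
  refine ⟨Q, ⟨fun f => coupling_nonneg π q hπ0 hq0 f, coupling_total π q hπ1 hq1⟩, hmarg, ?_⟩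
  rw [Finset.sum_congr rfl fun y _ => hunion y, Finset.sum_congr rfl fun y (_ : y ∈ Finset.univ) => hsup y]
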